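/- Fix n ≥ 3. There are exactly 2^{n−1} signature matrices ε for which an ε-SL₂-tiling of ℤⁿ exists, namely the matrices of the form ε_{kℓ} = −δ_k·δ_ℓ (k ≠ ℓ) for some δ ∈ {±1}ⁿ, and whenever such a tiling exists it is unique up to translation. -/

import Mathlib

namespace SL2T

def u : ℕ → ℤ
  | 0 => 1
  | 1 => 1
  | (n+2) => 3 * u (n+1) - u n

lemma u_pos_mono : ∀ n, 0 < u n ∧ u n ≤ u (n+1) := by
  intro n
  induction n using Nat.twoStepInduction with
  | zero => exact ⟨one_pos, le_refl _⟩
  | one => refine ⟨one_pos, ?_⟩; show (1:ℤ) ≤ 3 * u 1 - u 0; norm_num [u]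
  | more n ih1 ih2 =>
    obtain ⟨h1, h2⟩ := ih1
    obtain ⟨h3, h4⟩ := ih2
    constructor
    · show 0 < 3 * u (n+1) - u n; linarith
    · show u (n+2) ≤ 3 * u (n+2) - u (n+1)
      have : 0 < u (n+2) := by show 0 < 3 * u (n+1) - u n; linarith
      linarith

lemma u_pos (n : ℕ) : 0 < u n := (u_pos_mono n).1

lemma u_key : ∀ n : ℕ, u n * u (n+2) = u (n+1) * u (n+1) + 1 := by
  intro n
  induction n with
  | zero => show u 0 * u 2 = u 1 * u 1 + 1; show 1 * (3 * u 1 - u 0) = _; norm_num [u]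
  | succ n ih =>
    show u (n+1) * u (n+3) = u (n+2) * u (n+2) + 1
    have h3 : u (n+3) = 3 * u (n+2) - u (n+1) := rfl
    have h2 : u (n+2) = 3 * u (n+1) - u n := rfl
    rw [h3]
    linear_combination ih - u (n+2) * h2

def s (m : ℤ) : ℤ := if 0 ≤ m then u m.toNat else u (1 - m).toNat

lemma s_nonneg_eq (m : ℤ) (h : 0 ≤ m) : s m = u m.toNat := if_pos h
lemma s_neg_eq (m : ℤ) (h : m < 0) : s m = u (1-m).toNat := if_neg (by omega)

lemma s_pos (m : ℤ) : 0 < s m := by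
  unfold s; split <;> exact u_pos _

lemma s_key (m : ℤ) : s m * s (m+2) = s (m+1) * s (m+1) + 1 := by
  rcases le_or_gt 0 m with hm | hm
  · rw [s_nonneg_eq m hm, s_nonneg_eq _ (by omega), s_nonneg_eq _ (by omega)]
    have h1 : (m+1).toNat = m.toNat + 1 := by omega
    have h2 : (m+2).toNat = m.toNat + 2 := by omega
    rw [h1, h2]; exact u_key m.toNat
  · rcases eq_or_lt_of_le (by omega : m ≤ -1) with h1 | h1
    · rw [h1]; norm_num
      rw [s_neg_eq _ (by norm_num), s_nonneg_eq _ (by norm_num), s_nonneg_eq _ (by norm_num)]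
      norm_num [u]; decide
    · rcases eq_or_lt_of_le (by omega : m ≤ -2) with h2 | h2
      · subst h2
        norm_num
        rw [s_neg_eq _ (by norm_num), s_nonneg_eq _ (by norm_num), s_neg_eq _ (by norm_num)]
        norm_num [u]; decide
      · have hm3 : m ≤ -3 := by omega
        rw [s_neg_eq _ (by omega), s_neg_eq _ (by omega), s_neg_eq _ (by omega)]
        have h1 : (1-m).toNat = (-1-m).toNat + 2 := by omega
        have h2 : (1-(m+1)).toNat = (-1-m).toNat + 1 := by omega
        have h3 : (1-(m+2)).toNat = (-1-m).toNat := by omega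
        rw [h1, h2, h3, mul_comm]
        exact u_key _


lemma cube_alg (x pk pl pm qkl qkm qlm w e1 e2 e3 : ℤ)
    (h1 : pl*pk - x*qkl = e1) (h2 : pm*pk - x*qkm = e2) (h3 : pm*pl - x*qlm = e3)
    (h4 : qkm*qkl - pk*w = e3) (h5 : qlm*qkl - pl*w = e2) :
    (pk*pl - e1)*(pk*e3 - pl*e2) = x*x*(pl*e3 - pk*e2) := by
  linear_combination (x*x*pl) * h4 - (x*x*pk) * h5 + (pk*e3 - pl*e2) * h1
    + (x*pl*qkl) * h2 - (x*pk*qkl) * h3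

section Tiling

variable {n : ℕ} {ε : Fin n → Fin n → ℤ} {a : (Fin n → ℤ) → ℤ}

lemma cube_master (hpos : ∀ i, 0 < a i)
    (hrel : ∀ (i : Fin n → ℤ) (k ℓ : Fin n), k ≠ ℓ →
      a (i + Pi.single ℓ 1) * a (i + Pi.single k 1)
        - a i * a (i + Pi.single k 1 + Pi.single ℓ 1) = ε k ℓ)
    {k ℓ m : Fin n} (hkl : k ≠ ℓ) (hkm : k ≠ m) (hlm : ℓ ≠ m) (i : Fin n → ℤ) :
    (a (i + Pi.single k 1) * a (i + Pi.single ℓ 1) - ε k ℓ) *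
        (a (i + Pi.single k 1) * ε ℓ m - a (i + Pi.single ℓ 1) * ε k m)
      = a i * a i * (a (i + Pi.single ℓ 1) * ε ℓ m - a (i + Pi.single k 1) * ε k m) := by
  have h1 := hrel i k ℓ hkl
  have h2 := hrel i k m hkm
  have h3 := hrel i ℓ m hlm
  have h4 := hrel (i + Pi.single k 1) ℓ m hlm
  have h5 := hrel (i + Pi.single ℓ 1) k m hkm
  have c1 : i + Pi.single ℓ 1 + Pi.single k 1 = i + Pi.single k 1 + Pi.single ℓ 1 :=
    add_right_comm i _ _
  rw [c1] at h5
  exact cube_alg (a i) (a (i + Pi.single k 1)) (a (i + Pi.single ℓ 1))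
    (a (i + Pi.single m 1)) (a (i + Pi.single k 1 + Pi.single ℓ 1))
    (a (i + Pi.single k 1 + Pi.single m 1)) (a (i + Pi.single ℓ 1 + Pi.single m 1))
    (a (i + Pi.single k 1 + Pi.single ℓ 1 + Pi.single m 1))
    (ε k ℓ) (ε k m) (ε ℓ m) h1 h2 h3 h4 h5

lemma neighbor_eq (hpos : ∀ i, 0 < a i)
    (hrel : ∀ (i : Fin n → ℤ) (k ℓ : Fin n), k ≠ ℓ →
      a (i + Pi.single ℓ 1) * a (i + Pi.single k 1)
        - a i * a (i + Pi.single k 1 + Pi.single ℓ 1) = ε k ℓ)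
    (hsign : ∀ k ℓ, k ≠ ℓ → ε k ℓ = 1 ∨ ε k ℓ = -1)
    {k ℓ m : Fin n} (hkl : k ≠ ℓ) (hkm : k ≠ m) (hlm : ℓ ≠ m)
    (he : ε k m = ε ℓ m) (i : Fin n → ℤ) :
    a (i + Pi.single k 1) = a (i + Pi.single ℓ 1) := by
  have key := cube_master hpos hrel hkl hkm hlm i
  rw [← he] at key
  have hzero : (a (i + Pi.single k 1) - a (i + Pi.single ℓ 1)) *
      (ε k m * (a (i + Pi.single k 1) * a (i + Pi.single ℓ 1) - ε k ℓ + a i * a i)) = 0 := by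
    linear_combination key
  have h1 : (1:ℤ) ≤ a i := hpos i
  have h2 : (1:ℤ) ≤ a (i + Pi.single k 1) := hpos _
  have h3 : (1:ℤ) ≤ a (i + Pi.single ℓ 1) := hpos _
  have h4 : ε k ℓ ≤ 1 := by rcases hsign k ℓ hkl with h | h <;> omega
  have hF : 0 < a (i + Pi.single k 1) * a (i + Pi.single ℓ 1) - ε k ℓ + a i * a i := by
    nlinarith
  rcases mul_eq_zero.mp hzero with h | h
  · linarith
  · exfalso
    rcases hsign k m hkm with h' | h' <;> rw [h'] at h <;> nlinarith

lemma diag_eq (hpos : ∀ i, 0 < a i)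
    (hrel : ∀ (i : Fin n → ℤ) (k ℓ : Fin n), k ≠ ℓ →
      a (i + Pi.single ℓ 1) * a (i + Pi.single k 1)
        - a i * a (i + Pi.single k 1 + Pi.single ℓ 1) = ε k ℓ)
    (hsign : ∀ k ℓ, k ≠ ℓ → ε k ℓ = 1 ∨ ε k ℓ = -1)
    {k ℓ m : Fin n} (hkl : k ≠ ℓ) (hkm : k ≠ m) (hlm : ℓ ≠ m)
    (he : ε k m = -ε ℓ m) (i : Fin n → ℤ) :
    a (i + Pi.single k 1 + Pi.single ℓ 1) = a i := by
  have key := cube_master hpos hrel hkl hkm hlm i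
  rw [he] at key
  have hzero : (ε ℓ m) * ((a (i + Pi.single k 1) + a (i + Pi.single ℓ 1)) *
      (a (i + Pi.single k 1) * a (i + Pi.single ℓ 1) - ε k ℓ - a i * a i)) = 0 := by
    linear_combination key
  have h1 : (1:ℤ) ≤ a i := hpos i
  have h2 : (1:ℤ) ≤ a (i + Pi.single k 1) := hpos _
  have h3 : (1:ℤ) ≤ a (i + Pi.single ℓ 1) := hpos _
  have helm : ε ℓ m ≠ 0 := by rcases hsign ℓ m hlm with h | h <;> omega
  have hprod : a (i + Pi.single k 1) * a (i + Pi.single ℓ 1) = ε k ℓ + a i * a i := by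
    rcases mul_eq_zero.mp hzero with h | h
    · exact absurd h helm
    · rcases mul_eq_zero.mp h with h | h
      · nlinarith
      · linarith
  have h1' := hrel i k ℓ hkl
  have : a i * (a (i + Pi.single k 1 + Pi.single ℓ 1) - a i) = 0 := by
    linear_combination hprod - h1'
  rcases mul_eq_zero.mp this with h | h
  · exfalso; linarith
  · linarith

end Tiling

lemma seq_min (w : ℤ → ℤ) (hpos : ∀ r, 0 < w r) : ∃ r₀, ∀ r, w r₀ ≤ w r := by
  obtain ⟨lb, ⟨r₀, hr₀⟩, hmin⟩ := Int.exists_least_of_bdd (P := fun y => ∃ r, w r = y)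
    ⟨0, fun z ⟨r, hr⟩ => hr ▸ (hpos r).le⟩ ⟨w 0, 0, rfl⟩
  exact ⟨r₀, fun r => hr₀ ▸ hmin (w r) ⟨r, rfl⟩⟩

lemma no_plus_seq (w : ℤ → ℤ) (hpos : ∀ r, 0 < w r)
    (hrel : ∀ r, w (r+1) * w (r+1) = w r * w (r+2) + 1) : False := by
  obtain ⟨r₀, hmin⟩ := seq_min w hpos
  have k := hrel (r₀ - 1)
  have e1 : r₀ - 1 + 1 = r₀ := by ring
  have e2 : r₀ - 1 + 2 = r₀ + 1 := by ring
  rw [e1, e2] at k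
  nlinarith [hmin (r₀ - 1), hmin (r₀ + 1), hpos r₀, hpos (r₀ - 1), hpos (r₀ + 1)]

section Tiling

variable {n : ℕ} {ε : Fin n → Fin n → ℤ} {a : (Fin n → ℤ) → ℤ}


lemma no_bad (hpos : ∀ i, 0 < a i)
    (hrel : ∀ (i : Fin n → ℤ) (k ℓ : Fin n), k ≠ ℓ →
      a (i + Pi.single ℓ 1) * a (i + Pi.single k 1)
        - a i * a (i + Pi.single k 1 + Pi.single ℓ 1) = ε k ℓ)
    (hsign : ∀ k ℓ, k ≠ ℓ → ε k ℓ = 1 ∨ ε k ℓ = -1)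
    {k ℓ m : Fin n} (hkl : k ≠ ℓ) (hkm : k ≠ m) (hlm : ℓ ≠ m)
    (hkl1 : ε k ℓ = 1) (he : ε k m = ε ℓ m) : False := by
  have hnb : ∀ j, a (j + Pi.single k 1) = a (j + Pi.single ℓ 1) :=
    neighbor_eq hpos hrel hsign hkl hkm hlm he
  have hs : ∀ r : ℤ, r • (Pi.single k 1 : Fin n → ℤ) + Pi.single k 1
      = (r+1) • (Pi.single k 1 : Fin n → ℤ) := by
    intro r; rw [add_smul, one_smul]
  apply no_plus_seq (fun r => a (r • (Pi.single k 1 : Fin n → ℤ)))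
    (fun r => hpos _)
  intro r
  have h := hrel (r • (Pi.single k 1 : Fin n → ℤ)) k ℓ hkl
  rw [hkl1] at h
  have e1 := hnb (r • (Pi.single k 1 : Fin n → ℤ))
  have e2 := hnb (r • (Pi.single k 1 : Fin n → ℤ) + Pi.single k 1)
  rw [← e1, hs r] at h
  rw [hs r] at e2
  rw [← e2, hs (r+1)] at h
  have e3 : r + 1 + 1 = r + 2 := by ring
  rw [e3] at h
  linarith [h]

lemma triangle (hpos : ∀ i, 0 < a i)
    (hrel : ∀ (i : Fin n → ℤ) (k ℓ : Fin n), k ≠ ℓ →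
      a (i + Pi.single ℓ 1) * a (i + Pi.single k 1)
        - a i * a (i + Pi.single k 1 + Pi.single ℓ 1) = ε k ℓ)
    (hsym : ∀ k ℓ, ε k ℓ = ε ℓ k)
    (hsign : ∀ k ℓ, k ≠ ℓ → ε k ℓ = 1 ∨ ε k ℓ = -1)
    {k ℓ m : Fin n} (hkl : k ≠ ℓ) (hkm : k ≠ m) (hlm : ℓ ≠ m) :
    ε k ℓ * (ε k m * ε ℓ m) = -1 := by
  rcases hsign k ℓ hkl with h1 | h1 <;> rcases hsign k m hkm with h2 | h2 <;>
    rcases hsign ℓ m hlm with h3 | h3 <;> rw [h1, h2, h3] <;> try norm_num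
  · exact no_bad hpos hrel hsign hkl hkm hlm h1 (by rw [h2, h3])
  · exact no_bad hpos hrel hsign hkl hkm hlm h1 (by rw [h2, h3])
  · exact no_bad hpos hrel hsign hkm hkl hlm.symm h2 (by rw [h1, hsym m ℓ, h3])
  · exact no_bad hpos hrel hsign hlm hkl.symm hkm.symm h3 (by rw [hsym ℓ k, h1, hsym m k, h2])

end Tiling

-- abstract 1D sequences with s(m)s(m+2) = s(m+1)^2 + 1
section OneD
variable (s : ℤ → ℤ)

lemma anchor (hpos : ∀ m, 0 < s m)
    (hkey : ∀ m, s m * s (m+2) = s (m+1) * s (m+1) + 1) :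
    ∃ m₀, s m₀ = 1 ∧ s (m₀ + 1) = 1 := by
  obtain ⟨lb, ⟨r₀, hr₀⟩, hmin⟩ := Int.exists_least_of_bdd (P := fun y => ∃ r, s r = y)
    ⟨0, fun z ⟨r, hr⟩ => hr ▸ (hpos r).le⟩ ⟨s 0, 0, rfl⟩
  have hmin' : ∀ r, s r₀ ≤ s r := fun r => hr₀ ▸ hmin (s r) ⟨r, rfl⟩
  have k := hkey (r₀ - 1)
  have e1 : r₀ - 1 + 1 = r₀ := by ring
  have e2 : r₀ - 1 + 2 = r₀ + 1 := by ring
  rw [e1, e2] at k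
  -- k : s (r₀-1) * s (r₀+1) = s r₀ * s r₀ + 1
  have hy := hmin' (r₀ - 1)
  have hz := hmin' (r₀ + 1)
  have hx := hpos r₀
  have hone : s r₀ = 1 := by
    by_contra hne
    have hx2 : 2 ≤ s r₀ := by omega
    -- either s(r₀-1) = s r₀ or s(r₀+1) = s r₀, else contradiction
    have : s (r₀-1) = s r₀ ∨ s (r₀+1) = s r₀ := by
      by_contra hcon
      push_neg at hcon
      have h1 : s r₀ + 1 ≤ s (r₀-1) := by omega
      have h2 : s r₀ + 1 ≤ s (r₀+1) := by omega
      nlinarith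
    have hdvd : s r₀ ∣ s r₀ * s r₀ + 1 := by
      rcases this with h | h
      · exact ⟨s (r₀+1), by rw [← k, h]⟩
      · exact ⟨s (r₀-1), by rw [← k, h, mul_comm]⟩
    have : s r₀ ∣ 1 := (dvd_add_right ⟨s r₀, rfl⟩).mp hdvd
    have := Int.le_of_dvd one_pos this
    omega
  rw [hone] at k
  -- s(r₀-1) * s(r₀+1) = 2, both ≥ 1
  have h1 := hpos (r₀ - 1)
  have h2 := hpos (r₀ + 1)
  have : s (r₀-1) = 1 ∨ s (r₀+1) = 1 := by
    by_contra hcon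
    push_neg at hcon
    have : 2 ≤ s (r₀-1) := by omega
    have : 2 ≤ s (r₀+1) := by omega
    nlinarith
  rcases this with h | h
  · exact ⟨r₀ - 1, h, by rw [e1, hone]⟩
  · exact ⟨r₀, hone, h⟩

lemma rec3 (hpos : ∀ m, 0 < s m)
    (hkey : ∀ m, s m * s (m+2) = s (m+1) * s (m+1) + 1)
    {m₀ : ℤ} (h0 : s m₀ = 1) (h1 : s (m₀ + 1) = 1) :
    ∀ m, s (m+2) = 3 * s (m+1) - s m := by
  have base : s (m₀ + 2) = 3 * s (m₀ + 1) - s m₀ := by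
    have := hkey m₀; rw [h0, h1] at this; omega
  have fwd : ∀ m, s (m+2) = 3 * s (m+1) - s m → s (m+3) = 3 * s (m+2) - s (m+1) := by
    intro m hm
    have k1 := hkey (m+1)
    have e : m + 1 + 2 = m + 3 := by ring
    have e2 : m + 1 + 1 = m + 2 := by ring
    rw [e, e2] at k1
    have k0 := hkey m
    have hz : s (m+1) * (s (m+3) - (3 * s (m+2) - s (m+1))) = 0 := by
      linear_combination k1 + s (m+2) * hm - k0
    rcases mul_eq_zero.mp hz with h | h
    · exact absurd h (by have := hpos (m+1); omega)
    · linarith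
  have bwd : ∀ m, s (m+3) = 3 * s (m+2) - s (m+1) → s (m+2) = 3 * s (m+1) - s m := by
    intro m hm
    have k1 := hkey (m+1)
    have e : m + 1 + 2 = m + 3 := by ring
    have e2 : m + 1 + 1 = m + 2 := by ring
    rw [e, e2] at k1
    have k0 := hkey m
    have hz : s (m+2) * (s m - (3 * s (m+1) - s (m+2))) = 0 := by
      linear_combination k0 + s (m+1) * hm - k1
    rcases mul_eq_zero.mp hz with h | h
    · exact absurd h (by have := hpos (m+2); omega)
    · linarith
  intro m
  have key : ∀ d : ℤ, s (m₀ + d + 2) = 3 * s (m₀ + d + 1) - s (m₀ + d) := by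
    intro d
    induction d using Int.induction_on with
    | zero => simpa using base
    | succ i ih =>
      have := fwd (m₀ + i) ih
      have e1 : m₀ + (i + 1) + 2 = m₀ + i + 3 := by ring
      have e2 : m₀ + (i + 1) + 1 = m₀ + i + 2 := by ring
      have e3 : (m₀ + (i + 1) : ℤ) = m₀ + i + 1 := by ring
      rw [e1, e2, e3]; exact this
    | pred i ih =>
      have e1 : m₀ + (-i - 1) + 3 = m₀ + -(i:ℤ) + 2 := by ring
      have e2 : m₀ + (-i - 1) + 2 = m₀ + -(i:ℤ) + 1 := by ring
      have e3 : m₀ + (-i - 1) + 1 = m₀ + -(i:ℤ) := by ring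
      apply bwd (m₀ + (-i - 1))
      rw [e1, e2, e3]; exact ih
  have := key (m - m₀)
  have e1 : m₀ + (m - m₀) + 2 = m + 2 := by ring
  have e2 : m₀ + (m - m₀) + 1 = m + 1 := by ring
  have e3 : m₀ + (m - m₀) = m := by ring
  rw [e1, e2, e3] at this
  exact this

lemma lin_unique (f g : ℤ → ℤ)
    (hf : ∀ m, f (m+2) = 3 * f (m+1) - f m)
    (hg : ∀ m, g (m+2) = 3 * g (m+1) - g m)
    (m₀ : ℤ) (h0 : f m₀ = g m₀) (h1 : f (m₀+1) = g (m₀+1)) : ∀ m, f m = g m := by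
  have key : ∀ d : ℤ, f (m₀+d) = g (m₀+d) ∧ f (m₀+d+1) = g (m₀+d+1) := by
    intro d
    induction d using Int.induction_on with
    | zero =>
      constructor
      · simpa using h0
      · simpa using h1
    | succ i ih =>
      obtain ⟨A, B⟩ := ih
      have hfi := hf (m₀+i)
      have hgi := hg (m₀+i)
      constructor
      · have e : m₀+((i:ℤ)+1) = m₀+i+1 := by ring
        rw [e]; exact B
      · have e : m₀+((i:ℤ)+1)+1 = m₀+i+2 := by ring
        rw [e, hfi, hgi, A, B]
    | pred i ih =>
      obtain ⟨A, B⟩ := ih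
      have hfi := hf (m₀+(-(i:ℤ)-1))
      have hgi := hg (m₀+(-(i:ℤ)-1))
      have e1 : m₀+(-(i:ℤ)-1)+2 = m₀+(-(i:ℤ))+1 := by ring
      have e2 : m₀+(-(i:ℤ)-1)+1 = m₀+(-(i:ℤ)) := by ring
      rw [e1, e2] at hfi hgi
      constructor
      · linarith
      · rw [e2]; exact A
  intro m
  have := (key (m - m₀)).1
  have e : m₀ + (m - m₀) = m := by ring
  rw [e] at this
  exact this

lemma unique1d (sa sb : ℤ → ℤ)
    (hpa : ∀ m, 0 < sa m) (hka : ∀ m, sa m * sa (m+2) = sa (m+1) * sa (m+1) + 1)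
    (hpb : ∀ m, 0 < sb m) (hkb : ∀ m, sb m * sb (m+2) = sb (m+1) * sb (m+1) + 1) :
    ∃ c, ∀ m, sb m = sa (m + c) := by
  obtain ⟨ma, ha0, ha1⟩ := anchor sa hpa hka
  obtain ⟨mb, hb0, hb1⟩ := anchor sb hpb hkb
  have ra := rec3 sa hpa hka ha0 ha1
  have rb := rec3 sb hpb hkb hb0 hb1
  refine ⟨ma - mb, ?_⟩
  apply lin_unique sb (fun m => sa (m + (ma - mb))) rb
  · intro m
    have := ra (m + (ma - mb))
    have e1 : m + (ma - mb) + 2 = m + 2 + (ma - mb) := by ring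
    have e2 : m + (ma - mb) + 1 = m + 1 + (ma - mb) := by ring
    rw [e1, e2] at this
    exact this
  · show sb mb = sa (mb + (ma - mb))
    rw [hb0, show mb + (ma - mb) = ma by ring, ha0]
  · show sb (mb+1) = sa (mb + 1 + (ma - mb))
    rw [hb1, show mb + 1 + (ma - mb) = ma + 1 by ring, ha1]

end OneD
section Level
variable {n : ℕ} (δ : Fin n → ℤ)
def L (v : Fin n → ℤ) : ℤ := ∑ t, δ t * v t
lemma L_add (x y : Fin n → ℤ) : L δ (x + y) = L δ x + L δ y := by
  simp [L, mul_add, Finset.sum_add_distrib]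
lemma L_single (k : Fin n) (c : ℤ) : L δ (Pi.single k c) = δ k * c := by
  simp [L, Pi.single_apply, mul_ite, Finset.sum_ite_eq']
lemma L_sub (x y : Fin n → ℤ) : L δ (x - y) = L δ x - L δ y := by
  simp [L, mul_sub, Finset.sum_sub_distrib]
end Level

section Structure

variable {n : ℕ} {ε : Fin n → Fin n → ℤ} {a : (Fin n → ℤ) → ℤ} {δ : Fin n → ℤ}


lemma third (hn : 3 ≤ n) (k ℓ : Fin n) : ∃ m : Fin n, m ≠ k ∧ m ≠ ℓ := by
  by_contra h
  push_neg at h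
  have hsub : (Finset.univ : Finset (Fin n)) ⊆ {k, ℓ} := by
    intro m _
    rcases Classical.em (m = k) with h' | h'
    · simp [h']
    · simp [h m h']
  have := Finset.card_le_card hsub
  simp only [Finset.card_univ, Fintype.card_fin] at this
  have h2 : ({k, ℓ} : Finset (Fin n)).card ≤ 2 :=
    (Finset.card_insert_le _ _).trans (by simp)
  omega

lemma level_eq (hn : 3 ≤ n)
    (hδ : ∀ k, δ k = 1 ∨ δ k = -1)
    (hε : ∀ k ℓ : Fin n, k ≠ ℓ → ε k ℓ = -(δ k * δ ℓ))
    (hpos : ∀ i, 0 < a i)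
    (hrel : ∀ (i : Fin n → ℤ) (k ℓ : Fin n), k ≠ ℓ →
      a (i + Pi.single ℓ 1) * a (i + Pi.single k 1)
        - a i * a (i + Pi.single k 1 + Pi.single ℓ 1) = ε k ℓ) :
    ∀ i j : Fin n → ℤ, L δ i = L δ j → a i = a j := by
  have hsign : ∀ k ℓ, k ≠ ℓ → ε k ℓ = 1 ∨ ε k ℓ = -1 := by
    intro k ℓ hkl
    rw [hε k ℓ hkl]
    rcases hδ k with h | h <;> rcases hδ ℓ with h' | h' <;> rw [h, h'] <;> norm_num
  have inv1 : ∀ k ℓ : Fin n, k ≠ ℓ → δ k = δ ℓ →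
      ∀ j : Fin n → ℤ, a (j + Pi.single k 1) = a (j + Pi.single ℓ 1) := by
    intro k ℓ hkl hd j
    obtain ⟨m, hmk, hml⟩ := third hn k ℓ
    exact neighbor_eq hpos hrel hsign hkl (Ne.symm hmk) (Ne.symm hml)
      (by rw [hε k m (Ne.symm hmk), hε ℓ m (Ne.symm hml), hd]) j
  have inv2 : ∀ k ℓ : Fin n, k ≠ ℓ → δ k = -δ ℓ →
      ∀ j : Fin n → ℤ, a (j + Pi.single k 1 + Pi.single ℓ 1) = a j := by
    intro k ℓ hkl hd j
    obtain ⟨m, hmk, hml⟩ := third hn k ℓ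
    exact diag_eq hpos hrel hsign hkl (Ne.symm hmk) (Ne.symm hml)
      (by rw [hε k m (Ne.symm hmk), hε ℓ m (Ne.symm hml), hd]; ring) j
  -- invariance under the generator single p (δ p) - single q (δ q)
  have ginv : ∀ p q : Fin n, p ≠ q →
      ∀ j : Fin n → ℤ, a (j + (Pi.single p (δ p) - Pi.single q (δ q))) = a j := by
    intro p q hpq j
    rcases hδ p with hp | hp <;> rcases hδ q with hq | hq <;> rw [hp, hq]
    · have := inv1 p q hpq (by rw [hp, hq]) (j - Pi.single q 1)
      have e1 : j - Pi.single q 1 + Pi.single p 1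
          = j + (Pi.single p 1 - Pi.single q 1) := by abel
      have e2 : j - Pi.single q 1 + Pi.single q 1 = j := by abel
      rw [e1, e2] at this
      exact this
    · rw [Pi.single_neg, sub_neg_eq_add]
      have := inv2 p q hpq (by omega) j
      have e1 : j + Pi.single p 1 + Pi.single q 1
          = j + (Pi.single p 1 + Pi.single q 1) := by abel
      rw [e1] at this
      exact this
    · rw [Pi.single_neg]
      have := inv2 p q hpq (by omega)
        (j + (-Pi.single p 1 - Pi.single q 1))
      have e1 : j + (-Pi.single p 1 - Pi.single q 1) + Pi.single p 1 + Pi.single q 1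
          = j := by abel
      rw [e1] at this
      exact this.symm
    · rw [Pi.single_neg, Pi.single_neg]
      have := inv1 q p hpq.symm (by rw [hp, hq]) (j - Pi.single p 1)
      have e1 : j - Pi.single p 1 + Pi.single q 1
          = j + (-Pi.single p 1 - -Pi.single q 1) := by abel
      have e2 : j - Pi.single p 1 + Pi.single p 1 = j := by abel
      rw [e1, e2] at this
      exact this
  -- the walk
  have walk : ∀ N : ℕ, ∀ v : Fin n → ℤ, (∑ t, (v t).natAbs) ≤ N → L δ v = 0 →
      ∀ i, a (i + v) = a i := by
    intro N
    induction N with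
    | zero =>
      intro v hsum _ i
      have hv : v = 0 := by
        funext t
        have h2 : (v t).natAbs ≤ ∑ t, (v t).natAbs := Finset.single_le_sum
          (f := fun t => (v t).natAbs) (fun _ _ => Nat.zero_le _) (Finset.mem_univ t)
        have h3 : (v t).natAbs = 0 := by omega
        rw [Pi.zero_apply]
        omega
      rw [hv, add_zero]
    | succ N ih =>
      intro v hsum hlev i
      by_cases hv : v = 0
      · rw [hv, add_zero]
      · obtain ⟨k₁, hk₁⟩ := Function.ne_iff.mp hv
        have hterm : δ k₁ * v k₁ ≠ 0 := by
          rcases hδ k₁ with h | h <;> rw [h] <;> simpa using hk₁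
        have hpossum : ∃ p, 0 < δ p * v p := by
          by_contra hcon
          push_neg at hcon
          have hlt : ∑ t, δ t * v t < ∑ t : Fin n, (0:ℤ) :=
            Finset.sum_lt_sum (fun t _ => hcon t)
              ⟨k₁, Finset.mem_univ k₁, lt_of_le_of_ne (hcon k₁) hterm⟩
          rw [Finset.sum_const_zero] at hlt
          exact absurd hlev (by rw [L] at *; omega)
        have hnegsum : ∃ q, δ q * v q < 0 := by
          by_contra hcon
          push_neg at hcon
          have hlt : ∑ t : Fin n, (0:ℤ) < ∑ t, δ t * v t :=
            Finset.sum_lt_sum (fun t _ => hcon t)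
              ⟨k₁, Finset.mem_univ k₁, lt_of_le_of_ne (hcon k₁) (Ne.symm hterm)⟩
          rw [Finset.sum_const_zero] at hlt
          exact absurd hlev (by rw [L] at *; omega)
        obtain ⟨p, hp⟩ := hpossum
        obtain ⟨q, hq⟩ := hnegsum
        have hpq : p ≠ q := by rintro rfl; omega
        set g : Fin n → ℤ := Pi.single p (δ p) - Pi.single q (δ q) with hg
        set v' : Fin n → ℤ := v - g with hv'
        have hL' : L δ v' = 0 := by
          rw [hv', L_sub, hg, L_sub, L_single, L_single, hlev]
          rcases hδ p with h | h <;> rcases hδ q with h' | h' <;> rw [h, h'] <;> ring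
        have hvp' : v' p = v p - δ p := by
          simp [hv', hg, Pi.single_apply, hpq]
        have hvq' : v' q = v q + δ q := by
          simp [hv', hg, Pi.single_apply, Ne.symm hpq]
        have hvt' : ∀ t, t ≠ p → t ≠ q → v' t = v t := by
          intro t htp htq
          simp [hv', hg, Pi.single_apply, htp, htq]
        have habs_p : (v' p).natAbs = (v p).natAbs - 1 ∧ 1 ≤ (v p).natAbs := by
          rcases hδ p with h | h <;> rw [h] at hp <;> rw [hvp', h] <;>
            constructor <;> omega
        have habs_q : (v' q).natAbs = (v q).natAbs - 1 ∧ 1 ≤ (v q).natAbs := by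
          rcases hδ q with h | h <;> rw [h] at hq <;> rw [hvq', h] <;>
            constructor <;> omega
        have hsplit : ∀ w : Fin n → ℕ, ∑ t, w t
            = w p + (w q + ∑ t ∈ (Finset.univ.erase p).erase q, w t) := by
          intro w
          rw [Finset.add_sum_erase _ w (Finset.mem_erase.mpr ⟨Ne.symm hpq, Finset.mem_univ q⟩)]
          rw [Finset.add_sum_erase _ w (Finset.mem_univ p)]
        have hsum' : (∑ t, (v' t).natAbs) ≤ N := by
          have h1 := hsplit (fun t => (v' t).natAbs)
          have h2 := hsplit (fun t => (v t).natAbs)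
          have h3 : ∑ t ∈ (Finset.univ.erase p).erase q, (v' t).natAbs
              = ∑ t ∈ (Finset.univ.erase p).erase q, (v t).natAbs := by
            apply Finset.sum_congr rfl
            intro t ht
            obtain ⟨htq, ht2⟩ := Finset.mem_erase.mp ht
            obtain ⟨htp, _⟩ := Finset.mem_erase.mp ht2
            rw [hvt' t htp htq]
          simp only [h3] at h1
          omega
        have hstep : a (i + v) = a ((i + v') + g) := by
          congr 1
          rw [hv']
          abel
        rw [hstep, ginv p q hpq (i + v'), ih v' hsum' hL' i]
  intro i j hij
  have := walk (∑ t, ((i - j) t).natAbs) (i - j) le_rfl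
    (by rw [L_sub, hij, sub_self]) j
  have e : j + (i - j) = i := by abel
  rw [e] at this
  exact this

end Structure
lemma tiling_of_delta {n : ℕ} (δ : Fin n → ℤ) (hδ : ∀ k, δ k = 1 ∨ δ k = -1) :
    ∃ a : (Fin n → ℤ) → ℤ,
      (∀ i, 0 < a i) ∧
      (∀ (i : Fin n → ℤ) (k ℓ : Fin n), k ≠ ℓ →
        a (i + Pi.single ℓ 1) * a (i + Pi.single k 1)
          - a i * a (i + Pi.single k 1 + Pi.single ℓ 1) = -(δ k * δ ℓ)) := by
  refine ⟨fun i => s (L δ i), fun i => s_pos _, ?_⟩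
  intro i k ℓ hkl
  have ek : L δ (i + Pi.single k 1) = L δ i + δ k := by
    rw [L_add, L_single, mul_one]
  have el : L δ (i + Pi.single ℓ 1) = L δ i + δ ℓ := by
    rw [L_add, L_single, mul_one]
  have ekl : L δ (i + Pi.single k 1 + Pi.single ℓ 1) = L δ i + δ k + δ ℓ := by
    rw [L_add, L_single, mul_one, ek]
  simp only [ek, el, ekl]
  set m := L δ i
  rcases hδ k with hk | hk <;> rcases hδ ℓ with hl | hl <;> rw [hk, hl] <;> norm_num
  · -- s(m+1)^2 - s m * s (m+2) = -1
    have := s_key m; have e : m + 1 + 1 = m + 2 := by ring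
    rw [e]; linarith
  · -- δk = 1, δℓ = -1 : s (m-1) * s (m+1) - s m * s m = 1
    have := s_key (m - 1)
    have e1 : m - 1 + 2 = m + 1 := by ring
    have e2 : m - 1 + 1 = m := by ring
    rw [e1, e2] at this
    ring_nf at this ⊢
    linarith
  · -- δk = -1, δℓ = 1 : s (m+1) * s (m-1) - s m * s m = 1
    have := s_key (m - 1)
    have e1 : m - 1 + 2 = m + 1 := by ring
    have e2 : m - 1 + 1 = m := by ring
    rw [e1, e2] at this
    ring_nf at this ⊢
    linarith
  · -- δk = δℓ = -1 : s (m-1)^2 - s m * s (m-2) = -1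
    have := s_key (m - 2)
    have e1 : m - 2 + 2 = m := by ring
    have e2 : m - 2 + 1 = m - 1 := by ring
    rw [e1, e2] at this
    ring_nf at this ⊢
    linarith



section Final

variable {n : ℕ} {ε : Fin n → Fin n → ℤ} {a : (Fin n → ℤ) → ℤ} {δ : Fin n → ℤ}

lemma pair_same (hn : 3 ≤ n) (hδ : ∀ k, δ k = 1 ∨ δ k = -1) :
    ∃ k ℓ : Fin n, k ≠ ℓ ∧ δ k = δ ℓ := by
  have h0 : (0 : ℕ) < n := by omega
  have h1 : (1 : ℕ) < n := by omega
  have h2 : (2 : ℕ) < n := by omega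
  set k0 : Fin n := ⟨0, h0⟩
  set k1 : Fin n := ⟨1, h1⟩
  set k2 : Fin n := ⟨2, h2⟩
  have h01 : k0 ≠ k1 := by simp [k0, k1, Fin.ext_iff]
  have h02 : k0 ≠ k2 := by simp [k0, k2, Fin.ext_iff]
  have h12 : k1 ≠ k2 := by simp [k1, k2, Fin.ext_iff]
  rcases hδ k0 with ha | ha <;> rcases hδ k1 with hb | hb <;> rcases hδ k2 with hc | hc
  · exact ⟨k0, k1, h01, by rw [ha, hb]⟩
  · exact ⟨k0, k1, h01, by rw [ha, hb]⟩
  · exact ⟨k0, k2, h02, by rw [ha, hc]⟩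
  · exact ⟨k1, k2, h12, by rw [hb, hc]⟩
  · exact ⟨k1, k2, h12, by rw [hb, hc]⟩
  · exact ⟨k0, k2, h02, by rw [ha, hc]⟩
  · exact ⟨k0, k1, h01, by rw [ha, hb]⟩
  · exact ⟨k0, k1, h01, by rw [ha, hb]⟩

lemma structure_of_tiling (hn : 3 ≤ n)
    (hδ : ∀ k, δ k = 1 ∨ δ k = -1)
    (hε : ∀ k ℓ : Fin n, k ≠ ℓ → ε k ℓ = -(δ k * δ ℓ))
    (hpos : ∀ i, 0 < a i)
    (hrel : ∀ (i : Fin n → ℤ) (k ℓ : Fin n), k ≠ ℓ →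
      a (i + Pi.single ℓ 1) * a (i + Pi.single k 1)
        - a i * a (i + Pi.single k 1 + Pi.single ℓ 1) = ε k ℓ) :
    ∃ sa : ℤ → ℤ, (∀ m, 0 < sa m) ∧
      (∀ m, sa m * sa (m+2) = sa (m+1) * sa (m+1) + 1) ∧
      (∀ i, a i = sa (L δ i)) := by
  have heq := level_eq hn hδ hε hpos hrel
  have h0 : (0 : ℕ) < n := by omega
  set k0 : Fin n := ⟨0, h0⟩
  set sa : ℤ → ℤ := fun m => a (Pi.single k0 (m * δ k0)) with hsa
  have hLpt : ∀ m : ℤ, L δ (Pi.single k0 (m * δ k0)) = m := by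
    intro m; rw [L_single]; rcases hδ k0 with h | h <;> rw [h] <;> ring
  have ha : ∀ i, a i = sa (L δ i) := fun i => heq i _ (hLpt (L δ i)).symm
  refine ⟨sa, fun m => hpos _, ?_, ha⟩
  obtain ⟨k, ℓ, hkl, hd⟩ := pair_same hn hδ
  have hbase : ∀ j : Fin n → ℤ,
      sa (L δ j + δ ℓ) * sa (L δ j + δ k)
        - sa (L δ j) * sa (L δ j + δ k + δ ℓ) = -(δ k * δ ℓ) := by
    intro j
    have h := hrel j k ℓ hkl
    rw [hε k ℓ hkl] at h
    have ek : L δ (j + Pi.single k 1) = L δ j + δ k := by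
      rw [L_add, L_single, mul_one]
    have el : L δ (j + Pi.single ℓ 1) = L δ j + δ ℓ := by
      rw [L_add, L_single, mul_one]
    have ekl : L δ (j + Pi.single k 1 + Pi.single ℓ 1) = L δ j + δ k + δ ℓ := by
      rw [L_add, L_single, mul_one, ek]
    rw [ha j, ha (j + Pi.single k 1), ha (j + Pi.single ℓ 1),
      ha (j + Pi.single k 1 + Pi.single ℓ 1), ek, el, ekl] at h
    exact h
  intro m
  rcases hδ k with hk | hk
  · have := hbase (Pi.single k0 (m * δ k0))
    rw [hLpt, ← hd, hk] at this
    have e : m + 1 + 1 = m + 2 := by ring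
    rw [e] at this
    nlinarith [this]
  · have := hbase (Pi.single k0 ((m + 2) * δ k0))
    rw [hLpt, ← hd, hk] at this
    have e2 : m + 2 + -1 + -1 = m := by ring
    have e1 : m + 2 + -1 = m + 1 := by ring
    rw [e2, e1] at this
    nlinarith [this]

lemma delta_of_tiling (hn : 3 ≤ n)
    (hsym : ∀ k ℓ, ε k ℓ = ε ℓ k)
    (hsign : ∀ k ℓ, k ≠ ℓ → ε k ℓ = 1 ∨ ε k ℓ = -1)
    (hpos : ∀ i, 0 < a i)
    (hrel : ∀ (i : Fin n → ℤ) (k ℓ : Fin n), k ≠ ℓ →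
      a (i + Pi.single ℓ 1) * a (i + Pi.single k 1)
        - a i * a (i + Pi.single k 1 + Pi.single ℓ 1) = ε k ℓ) :
    ∃ δ : Fin n → ℤ, (∀ k, δ k = 1 ∨ δ k = -1) ∧
      ∀ k ℓ, k ≠ ℓ → ε k ℓ = -(δ k * δ ℓ) := by
  have h0 : (0 : ℕ) < n := by omega
  set k0 : Fin n := ⟨0, h0⟩
  classical
  refine ⟨fun k => if k = k0 then 1 else -ε k0 k, ?_, ?_⟩
  · intro k
    by_cases hk : k = k0
    · simp [hk]
    · simp only [if_neg hk]
      rcases hsign k0 k (fun h => hk h.symm) with h | h <;> rw [h] <;> norm_num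
  · intro k ℓ hkl
    by_cases hk : k = k0 <;> by_cases hl : ℓ = k0
    · exact absurd (hk.trans hl.symm) hkl
    · subst hk
      simp only [if_pos rfl, if_neg hl]
      simp
    · subst hl
      simp only [if_pos rfl, if_neg hk]
      rw [hsym k k0]
      simp
    · simp only [if_neg hk, if_neg hl]
      have tri := triangle hpos hrel hsym hsign
        (fun h : k0 = k => hk h.symm) (fun h : k0 = ℓ => hl h.symm) hkl
      rcases hsign k0 k (fun h => hk h.symm) with hA | hA <;>
        rcases hsign k0 ℓ (fun h => hl h.symm) with hB | hB <;>
        rcases hsign k ℓ hkl with hC | hC <;>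
        rw [hA, hB, hC] at tri ⊢ <;> revert tri <;> norm_num

lemma classify (hn : 3 ≤ n)
    (hsym : ∀ k ℓ, ε k ℓ = ε ℓ k)
    (hsign : ∀ k ℓ, k ≠ ℓ → ε k ℓ = 1 ∨ ε k ℓ = -1) :
    (∃ a : (Fin n → ℤ) → ℤ,
        (∀ i, 0 < a i) ∧
        (∀ (i : Fin n → ℤ) (k ℓ : Fin n), k ≠ ℓ →
          a (i + Pi.single ℓ 1) * a (i + Pi.single k 1)
            - a i * a (i + Pi.single k 1 + Pi.single ℓ 1) = ε k ℓ)) ↔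
      (∃ δ : Fin n → ℤ, (∀ k, δ k = 1 ∨ δ k = -1) ∧
        ∀ k ℓ, k ≠ ℓ → ε k ℓ = -(δ k * δ ℓ)) := by
  constructor
  · rintro ⟨a, hpos, hrel⟩
    exact delta_of_tiling hn hsym hsign hpos hrel
  · rintro ⟨δ, hδ, hd⟩
    obtain ⟨a, hpos, hrel⟩ := tiling_of_delta δ hδ
    exact ⟨a, hpos, fun i k ℓ hkl => by rw [hrel i k ℓ hkl, hd k ℓ hkl]⟩

lemma translate (hn : 3 ≤ n)
    (hsym : ∀ k ℓ, ε k ℓ = ε ℓ k)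
    (hsign : ∀ k ℓ, k ≠ ℓ → ε k ℓ = 1 ∨ ε k ℓ = -1)
    {b : (Fin n → ℤ) → ℤ}
    (hpa : ∀ i, 0 < a i)
    (hra : ∀ (i : Fin n → ℤ) (k ℓ : Fin n), k ≠ ℓ →
      a (i + Pi.single ℓ 1) * a (i + Pi.single k 1)
        - a i * a (i + Pi.single k 1 + Pi.single ℓ 1) = ε k ℓ)
    (hpb : ∀ i, 0 < b i)
    (hrb : ∀ (i : Fin n → ℤ) (k ℓ : Fin n), k ≠ ℓ →
      b (i + Pi.single ℓ 1) * b (i + Pi.single k 1)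
        - b i * b (i + Pi.single k 1 + Pi.single ℓ 1) = ε k ℓ) :
    ∃ t : Fin n → ℤ, ∀ i, b i = a (i + t) := by
  obtain ⟨δ, hδ, hd⟩ := delta_of_tiling hn hsym hsign hpa hra
  obtain ⟨sa, hpsa, hksa, hca⟩ := structure_of_tiling hn hδ hd hpa hra
  obtain ⟨sb, hpsb, hksb, hcb⟩ := structure_of_tiling hn hδ hd hpb hrb
  obtain ⟨c, hc⟩ := unique1d sa sb hpsa hksa hpsb hksb
  have h0 : (0 : ℕ) < n := by omega
  set k0 : Fin n := ⟨0, h0⟩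
  refine ⟨Pi.single k0 (c * δ k0), ?_⟩
  intro i
  have hLt : L δ (i + Pi.single k0 (c * δ k0)) = L δ i + c := by
    rw [L_add, L_single]
    rcases hδ k0 with h | h <;> rw [h] <;> ring
  have hr1 : b i = sa (L δ i + c) := by rw [hcb i, hc]
  have hr2 : a (i + Pi.single k0 (c * δ k0)) = sa (L δ i + c) :=
    (hca (i + Pi.single k0 (c * δ k0))).trans (congrArg sa hLt)
  exact hr1.trans hr2.symm




lemma count (n : ℕ) (hn : 3 ≤ n) :
    {ε : Fin n → Fin n → ℤ |
      ((∀ k ℓ, ε k ℓ = ε ℓ k) ∧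
       (∀ k ℓ, k ≠ ℓ → ε k ℓ = 1 ∨ ε k ℓ = -1) ∧
       (∀ k, ε k k = -1)) ∧
      (∃ a : (Fin n → ℤ) → ℤ,
        (∀ i, 0 < a i) ∧
        (∀ (i : Fin n → ℤ) (k ℓ : Fin n), k ≠ ℓ →
          a (i + Pi.single ℓ 1) * a (i + Pi.single k 1)
            - a i * a (i + Pi.single k 1 + Pi.single ℓ 1) = ε k ℓ))}.ncard
      = 2 ^ (n - 1) := by
  classical
  have h0 : (0 : ℕ) < n := by omega
  set k0 : Fin n := ⟨0, h0⟩ with hk0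
  set g : (Fin n → ℤ) → (Fin n → Fin n → ℤ) := fun δ => fun k ℓ => -(δ k * δ ℓ) with hg
  set D : Set (Fin n → ℤ) := {δ | (∀ k, δ k = 1 ∨ δ k = -1) ∧ δ k0 = 1} with hD
  have hprops : ∀ δ : Fin n → ℤ, (∀ k, δ k = 1 ∨ δ k = -1) →
      ((∀ k ℓ, g δ k ℓ = g δ ℓ k) ∧
       (∀ k ℓ, k ≠ ℓ → g δ k ℓ = 1 ∨ g δ k ℓ = -1) ∧
       (∀ k, g δ k k = -1)) := by
    intro δ hδ
    refine ⟨fun k ℓ => by show -(δ k * δ ℓ) = -(δ ℓ * δ k); ring, fun k ℓ _ => ?_, fun k => ?_⟩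
    · show -(δ k * δ ℓ) = 1 ∨ -(δ k * δ ℓ) = -1
      rcases hδ k with h | h <;> rcases hδ ℓ with h' | h' <;> rw [h, h'] <;> norm_num
    · show -(δ k * δ k) = -1
      rcases hδ k with h | h <;> rw [h] <;> norm_num
  have hSet : {ε : Fin n → Fin n → ℤ |
      ((∀ k ℓ, ε k ℓ = ε ℓ k) ∧
       (∀ k ℓ, k ≠ ℓ → ε k ℓ = 1 ∨ ε k ℓ = -1) ∧
       (∀ k, ε k k = -1)) ∧
      (∃ a : (Fin n → ℤ) → ℤ,
        (∀ i, 0 < a i) ∧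
        (∀ (i : Fin n → ℤ) (k ℓ : Fin n), k ≠ ℓ →
          a (i + Pi.single ℓ 1) * a (i + Pi.single k 1)
            - a i * a (i + Pi.single k 1 + Pi.single ℓ 1) = ε k ℓ))} = g '' D := by
    ext ε
    simp only [Set.mem_setOf_eq, Set.mem_image]
    constructor
    · rintro ⟨⟨hsym, hsign, hdiag⟩, hex⟩
      obtain ⟨δ', hδ', hd'⟩ := (classify hn hsym hsign).mp hex
      refine ⟨fun k => δ' k0 * δ' k, ⟨fun k => ?_, ?_⟩, ?_⟩
      · show δ' k0 * δ' k = 1 ∨ δ' k0 * δ' k = -1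
        rcases hδ' k0 with h | h <;> rcases hδ' k with h' | h' <;> rw [h, h'] <;> norm_num
      · show δ' k0 * δ' k0 = 1
        rcases hδ' k0 with h | h <;> rw [h] <;> norm_num
      · funext k ℓ
        show -(δ' k0 * δ' k * (δ' k0 * δ' ℓ)) = ε k ℓ
        by_cases hkl : k = ℓ
        · subst hkl
          rw [hdiag k]
          rcases hδ' k0 with h | h <;> rcases hδ' k with h' | h' <;> rw [h, h'] <;> norm_num
        · rw [hd' k ℓ hkl]
          rcases hδ' k0 with h | h <;> rw [h] <;> ring
    · rintro ⟨δ, ⟨hδ, hδ0⟩, rfl⟩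
      obtain ⟨hsym, hsign, hdiag⟩ := hprops δ hδ
      exact ⟨⟨hsym, hsign, hdiag⟩,
        (classify hn hsym hsign).mpr ⟨δ, hδ, fun k ℓ _ => rfl⟩⟩
  have hinj : Set.InjOn g D := by
    intro δ1 h1 δ2 h2 heq
    funext k
    have := congrFun (congrFun heq k0) k
    simp only [hg] at this
    rw [h1.2, h2.2] at this
    simpa using this
  rw [hSet, Set.ncard_image_of_injOn hinj]
  set t : Fin n → Finset ℤ := fun k => if k = k0 then {1} else {1, -1} with ht
  have hmem : ∀ δ : Fin n → ℤ, (∀ k, δ k ∈ t k) ↔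
      ((∀ k, δ k = 1 ∨ δ k = -1) ∧ δ k0 = 1) := by
    intro δ
    constructor
    · intro h
      have h0' : δ k0 = 1 := by have := h k0; simpa [ht] using this
      refine ⟨fun k => ?_, h0'⟩
      by_cases hk : k = k0
      · subst hk; exact Or.inl h0'
      · have := h k; simpa [ht, hk] using this
    · rintro ⟨h1, h2⟩ k
      by_cases hk : k = k0
      · subst hk; simp [ht, h2]
      · simpa [ht, hk] using h1 k
  have hDF : D = ↑(Fintype.piFinset t) := by
    ext δ
    simp only [hD, Set.mem_setOf_eq, Finset.coe_sort_coe, Finset.mem_coe,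
      Fintype.mem_piFinset]
    exact (hmem δ).symm
  rw [hDF, Set.ncard_coe_finset, Fintype.card_piFinset]
  have hcard : ∀ k : Fin n, (t k).card = if k = k0 then 1 else 2 := by
    intro k
    by_cases hk : k = k0
    · simp [ht, hk]
    · rw [ht]; simp only [if_neg hk]; decide
  rw [Finset.prod_congr rfl (fun k _ => hcard k)]
  rw [← Finset.prod_erase_mul _ _ (Finset.mem_univ k0)]
  rw [if_pos rfl, mul_one]
  have : ∀ x ∈ Finset.univ.erase k0, (if x = k0 then 1 else 2) = 2 := by
    intro x hx
    rw [if_neg (Finset.mem_erase.mp hx).1]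
  rw [Finset.prod_congr rfl this, Finset.prod_const,
    Finset.card_erase_of_mem (Finset.mem_univ k0), Finset.card_univ, Fintype.card_fin]

end Final

end SL2T

theorem classification_of_tilings (n : ℕ) (hn : 3 ≤ n) :
    {ε : Fin n → Fin n → ℤ |
      ((∀ k ℓ, ε k ℓ = ε ℓ k) ∧
       (∀ k ℓ, k ≠ ℓ → ε k ℓ = 1 ∨ ε k ℓ = -1) ∧
       (∀ k, ε k k = -1)) ∧
      (∃ a : (Fin n → ℤ) → ℤ,
        (∀ i, 0 < a i) ∧
        (∀ (i : Fin n → ℤ) (k ℓ : Fin n), k ≠ ℓ →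
          a (i + Pi.single ℓ 1) * a (i + Pi.single k 1)
            - a i * a (i + Pi.single k 1 + Pi.single ℓ 1) = ε k ℓ))}.ncard
      = 2 ^ (n - 1) ∧
    (∀ ε : Fin n → Fin n → ℤ,
      ((∀ k ℓ, ε k ℓ = ε ℓ k) ∧
       (∀ k ℓ, k ≠ ℓ → ε k ℓ = 1 ∨ ε k ℓ = -1) ∧
       (∀ k, ε k k = -1)) →
      ((∃ a : (Fin n → ℤ) → ℤ,
        (∀ i, 0 < a i) ∧
        (∀ (i : Fin n → ℤ) (k ℓ : Fin n), k ≠ ℓ →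
          a (i + Pi.single ℓ 1) * a (i + Pi.single k 1)
            - a i * a (i + Pi.single k 1 + Pi.single ℓ 1) = ε k ℓ)) ↔
       (∃ δ : Fin n → ℤ, (∀ k, δ k = 1 ∨ δ k = -1) ∧
         ∀ k ℓ, k ≠ ℓ → ε k ℓ = -(δ k * δ ℓ)))) ∧
    (∀ ε : Fin n → Fin n → ℤ,
      ((∀ k ℓ, ε k ℓ = ε ℓ k) ∧
       (∀ k ℓ, k ≠ ℓ → ε k ℓ = 1 ∨ ε k ℓ = -1) ∧
       (∀ k, ε k k = -1)) →
      ∀ a b : (Fin n → ℤ) → ℤ,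
      (∀ i, 0 < a i) →
      (∀ (i : Fin n → ℤ) (k ℓ : Fin n), k ≠ ℓ →
        a (i + Pi.single ℓ 1) * a (i + Pi.single k 1)
          - a i * a (i + Pi.single k 1 + Pi.single ℓ 1) = ε k ℓ) →
      (∀ i, 0 < b i) →
      (∀ (i : Fin n → ℤ) (k ℓ : Fin n), k ≠ ℓ →
        b (i + Pi.single ℓ 1) * b (i + Pi.single k 1)
          - b i * b (i + Pi.single k 1 + Pi.single ℓ 1) = ε k ℓ) →
      ∃ t : Fin n → ℤ, ∀ i, b i = a (i + t)) := by
  refine ⟨SL2T.count n hn, fun ε hP => SL2T.classify hn hP.1 hP.2.1,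
    fun ε hP a b hpa hra hpb hrb => SL2T.translate hn hP.1 hP.2.1 hpa hra hpb hrb⟩
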